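/- Let c > 0 and define a : ℕ → ℝ by a(0) = c, a(1) = c − a(0)/4, and a(n+2) = c − a(n+1)/4 − a(n)/9 for all n ≥ 0. Then for every n ≥ 2, ∑_{i=0}^{n} a(i) < c·(36n + 53)/49. In particular, since the delay of traditional multi-hop routing over the same line is (n+1)·c, the total delay ∑_{i=0}^{n} a(i) of routing with mutual information accumulation is less than the fraction (36n + 53)/(49(n+1)) of the traditional routing delay, a fraction which tends to 36/49 as n → ∞. -/

import Mathlib

/-- for the stage-duration recursion `a 0 = c`,
`a 1 = c - a 0 / 4`, `a (n+2) = c - a (n+1) / 4 - a n / 9` with `c > 0`, for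
every `n ≥ 2` the total delay satisfies
`∑_{i=0}^{n} a i < c * (36n + 53) / 49`; in particular, since traditional
multi-hop routing over the same line has delay `(n+1) * c`, the total delay of
routing with mutual information accumulation is less than the fraction
`(36n + 53) / (49(n+1))` of the traditional routing delay. -/
theorem line_recursion_delay_gain (c : ℝ) (hc : 0 < c) (a : ℕ → ℝ)
    (h0 : a 0 = c) (h1 : a 1 = c - a 0 / 4)
    (hrec : ∀ n : ℕ, a (n + 2) = c - a (n + 1) / 4 - a n / 9) :
    ∀ n : ℕ, 2 ≤ n →
      (∑ i ∈ Finset.range (n + 1), a i) < c * (36 * (n : ℝ) + 53) / 49 ∧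
      (∑ i ∈ Finset.range (n + 1), a i) <
        ((36 * (n : ℝ) + 53) / (49 * ((n : ℝ) + 1))) * (((n : ℝ) + 1) * c) := by
  -- bounds: every a n is in (0, c]
  have hb : ∀ n, (0 < a n ∧ a n ≤ c) ∧ (0 < a (n + 1) ∧ a (n + 1) ≤ c) := by
    intro n
    induction n with
    | zero =>
      refine ⟨⟨?_, ?_⟩, ?_, ?_⟩ <;> simp only [h1, h0] <;> linarith
    | succ k ih =>
      obtain ⟨⟨h1p, h1u⟩, h2p, h2u⟩ := ih
      refine ⟨⟨h2p, h2u⟩, ?_, ?_⟩ <;> rw [hrec k] <;> linarith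
  -- closed form for the partial sums via the conserved quantity
  have hsum : ∀ n : ℕ, (∑ i ∈ Finset.range (n + 1), a i)
      = 36 * c * n / 49 + 72 * c / 49 - 36 * a (n + 1) / 49 + 4 * a n / 49 := by
    intro n
    induction n with
    | zero => simp [h1, h0]; ring
    | succ k ih =>
      rw [Finset.sum_range_succ, ih, hrec k]
      push_cast
      ring
  intro n hn
  obtain ⟨j, rfl⟩ : ∃ j, n = j + 2 := ⟨n - 2, by omega⟩
  obtain ⟨⟨hjp, hju⟩, h1p, h1u⟩ := hb j
  obtain ⟨_, h2p, h2u⟩ := hb (j + 1)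
  have hlt : a (j + 2) < c := by rw [hrec j]; linarith
  have key : (∑ i ∈ Finset.range (j + 2 + 1), a i)
      < c * (36 * ((j : ℝ) + 2) + 53) / 49 := by
    rw [hsum (j + 2), hrec (j + 1)]
    push_cast
    linarith
  constructor
  · convert key using 3 <;> push_cast <;> ring
  · have hrw : ((36 * (((j : ℕ) + 2 : ℕ) : ℝ) + 53) / (49 * ((((j : ℕ) + 2 : ℕ) : ℝ) + 1)))
        * (((((j : ℕ) + 2 : ℕ) : ℝ) + 1) * c)
        = c * (36 * ((j : ℝ) + 2) + 53) / 49 := by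
      have hne : (((j : ℕ) + 2 : ℕ) : ℝ) + 1 ≠ 0 := by positivity
      field_simp
      push_cast
      ring
    rw [hrw]
    exact key
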